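/- Under the same hypotheses (π unitary representation of G, Γ ≤ G, L a Γ-wandering generating subspace, P₀ a commuting projection, π₀(g) = P₀π(g)P₀, and absolute summability in operator norm of (P_L π₀(θ) P_L)_θ over each coset involved), define for a subset A ⊆ G of the form A = σ₁Γσ₂ the operator Φ(A) = Σ_{θ∈A} P_L π₀(θ) P_L. Then for all σ₁, σ₂ ∈ G one has Φ(σ₁Γ)·Φ(Γσ₂) = Φ(σ₁Γσ₂). -/

import Mathlib

open scoped InnerProductSpace

section Aux

variable {G H : Type*} [Group G] [NormedAddCommGroup H] [InnerProductSpace ℂ H]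
  [CompleteSpace H]

/-- Key analytic lemma: the orthogonal projections onto the translates `π(γ)L` of a
wandering generating subspace sum (in SOT) to the identity. -/
lemma wandering_hasSum (π : G →* (H →L[ℂ] H))
    (hunit : ∀ (g : G) (x y : H), ⟪π g x, π g y⟫_ℂ = ⟪x, y⟫_ℂ)
    (Γ : Subgroup G) (L : Submodule ℂ H)
    (horth : ∀ γ γ' : Γ, γ ≠ γ' → ∀ x ∈ L, ∀ y ∈ L, ⟪π ↑γ x, π ↑γ' y⟫_ℂ = 0)
    (hgen : (⨆ γ : Γ, L.map (π ↑γ).toLinearMap).topologicalClosure = ⊤)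
    (P : H →L[ℂ] H)
    (hPmem : ∀ x : H, P x ∈ L) (hPfix : ∀ x ∈ L, P x = x)
    (hPorth : ∀ x : H, ∀ y ∈ L, ⟪x - P x, y⟫_ℂ = 0)
    (x : H) :
    HasSum (fun γ : Γ => π ↑γ (P (π ((↑γ : G))⁻¹ x))) x := by
  set Qx : Γ → H := fun γ => π ↑γ (P (π ((↑γ : G))⁻¹ x)) with hQx
  have hinv : ∀ (g : G) (v : H), π g (π g⁻¹ v) = v := by
    intro g v
    have h1 : π g * π g⁻¹ = 1 := by rw [← map_mul, mul_inv_cancel, map_one]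
    calc π g (π g⁻¹ v) = (π g * π g⁻¹) v := rfl
      _ = v := by rw [h1]; simp
  have hnorm : ∀ (g : G) (v : H), ‖π g v‖ = ‖v‖ := by
    intro g v
    rw [@norm_eq_sqrt_re_inner ℂ, @norm_eq_sqrt_re_inner ℂ, hunit]
  have horthQ : ∀ γ γ' : Γ, γ ≠ γ' → ⟪Qx γ, Qx γ'⟫_ℂ = 0 := fun γ γ' h =>
    horth γ γ' h _ (hPmem _) _ (hPmem _)
  have hdiag : ∀ γ : Γ, ⟪x, Qx γ⟫_ℂ = ((‖Qx γ‖ : ℂ))^2 := by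
    intro γ
    have h1 : ⟪x, Qx γ⟫_ℂ
        = ⟪π ↑γ (π ((↑γ : G))⁻¹ x), π ↑γ (P (π ((↑γ : G))⁻¹ x))⟫_ℂ := by
      rw [hinv]
    rw [h1, hunit]
    set u := π ((↑γ : G))⁻¹ x with hu
    have h2 : ⟪u - P u, P u⟫_ℂ = 0 := hPorth u _ (hPmem u)
    rw [inner_sub_left, sub_eq_zero] at h2
    rw [h2, inner_self_eq_norm_sq_to_K]
    have h3 : ‖Qx γ‖ = ‖P u‖ := hnorm _ _
    rw [h3]
    norm_cast
  have pyth : ∀ s : Finset Γ,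
      ⟪∑ γ ∈ s, Qx γ, ∑ γ ∈ s, Qx γ⟫_ℂ = ((∑ γ ∈ s, ‖Qx γ‖^2 : ℝ) : ℂ) := by
    intro s
    rw [sum_inner]
    push_cast
    refine Finset.sum_congr rfl fun γ hγ => ?_
    rw [inner_sum]
    rw [Finset.sum_eq_single γ]
    · rw [inner_self_eq_norm_sq_to_K]; norm_cast
    · intro γ' _ hne
      exact horthQ γ γ' (Ne.symm hne)
    · intro h; exact absurd hγ h
  have pyth' : ∀ s : Finset Γ, ‖∑ γ ∈ s, Qx γ‖^2 = ∑ γ ∈ s, ‖Qx γ‖^2 := by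
    intro s
    rw [← inner_self_eq_norm_sq (𝕜 := ℂ), pyth s]
    norm_cast
  have bessel : ∀ s : Finset Γ, ∑ γ ∈ s, ‖Qx γ‖^2 ≤ ‖x‖^2 := by
    intro s
    have h0 : (0:ℝ) ≤ ‖x - ∑ γ ∈ s, Qx γ‖^2 := sq_nonneg _
    rw [@norm_sub_sq ℂ] at h0
    have hxS : ⟪x, ∑ γ ∈ s, Qx γ⟫_ℂ = ((∑ γ ∈ s, ‖Qx γ‖^2 : ℝ) : ℂ) := by
      rw [inner_sum]
      push_cast
      exact Finset.sum_congr rfl fun γ _ => hdiag γ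
    rw [hxS, pyth' s] at h0
    have hre : RCLike.re (((∑ γ ∈ s, ‖Qx γ‖^2 : ℝ)) : ℂ) = ∑ γ ∈ s, ‖Qx γ‖^2 := by
      norm_cast
    rw [hre] at h0
    linarith
  have hsq : Summable fun γ : Γ => ‖Qx γ‖^2 :=
    summable_of_sum_le (fun γ => sq_nonneg _) bessel
  have hsum : Summable Qx := by
    rw [summable_iff_vanishing_norm]
    intro ε hε
    obtain ⟨s, hs⟩ := summable_iff_vanishing_norm.1 hsq (ε^2) (by positivity)
    refine ⟨s, fun t ht => ?_⟩
    have h1 := hs t ht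
    have h2 : ∑ γ ∈ t, ‖Qx γ‖^2 < ε^2 := lt_of_abs_lt h1
    have h3 : ‖∑ γ ∈ t, Qx γ‖^2 < ε^2 := by rw [pyth' t]; exact h2
    exact lt_of_pow_lt_pow_left₀ 2 hε.le h3
  obtain ⟨y, hy⟩ := hsum
  have hxy : ∀ (γ : Γ), ∀ z ∈ L, ⟪x - y, π ↑γ z⟫_ℂ = 0 := by
    intro γ z hz
    have hw : HasSum (fun γ' : Γ => ⟪π ↑γ z, Qx γ'⟫_ℂ) ⟪π ↑γ z, y⟫_ℂ := by
      have := hy.mapL (innerSL ℂ (π ↑γ z))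
      simpa using this
    have hw2 : HasSum (fun γ' : Γ => ⟪π ↑γ z, Qx γ'⟫_ℂ) ⟪π ↑γ z, Qx γ⟫_ℂ := by
      refine hasSum_single γ fun γ' hne => ?_
      exact horth γ γ' (Ne.symm hne) z hz _ (hPmem _)
    have hyq : ⟪π ↑γ z, y⟫_ℂ = ⟪π ↑γ z, Qx γ⟫_ℂ := hw.unique hw2
    have h4 : ⟪y, π ↑γ z⟫_ℂ = ⟪Qx γ, π ↑γ z⟫_ℂ := by
      rw [← inner_conj_symm, hyq, inner_conj_symm]
    rw [inner_sub_left, h4, ← inner_sub_left]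
    have h5 : x - Qx γ = π ↑γ (π ((↑γ : G))⁻¹ x - P (π ((↑γ : G))⁻¹ x)) := by
      rw [map_sub, hinv]
    rw [h5, hunit]
    exact hPorth _ z hz
  have hker : (⨆ γ : Γ, L.map (π ↑γ).toLinearMap)
      ≤ LinearMap.ker ((innerSL ℂ (x - y) : H →L[ℂ] ℂ) : H →ₗ[ℂ] ℂ) := by
    refine iSup_le fun γ => ?_
    rintro w ⟨z, hz, rfl⟩
    have h6 := hxy γ z hz
    rw [inner_sub_left] at h6
    simpa using h6
  have hclos := Submodule.topologicalClosure_minimal _ hker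
    (ContinuousLinearMap.isClosed_ker _)
  rw [hgen] at hclos
  have hmem : x - y ∈ LinearMap.ker ((innerSL ℂ (x - y) : H →L[ℂ] ℂ) : H →ₗ[ℂ] ℂ) := hclos trivial
  have h0 : ⟪x - y, x - y⟫_ℂ = 0 := hmem
  rw [inner_self_eq_zero, sub_eq_zero] at h0
  rwa [h0]

end Aux

set_option maxHeartbeats 1600000 in
/-- With `Φ(A) = Σ_{θ∈A} P_L π₀(θ) P_L` (absolutely summable in operator norm), for all
`σ₁, σ₂ ∈ G` one has `Φ(σ₁Γ)·Φ(Γσ₂) = Φ(σ₁Γσ₂)`. -/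
theorem stmt14 {G H : Type*} [Group G] [NormedAddCommGroup H] [InnerProductSpace ℂ H]
    [CompleteSpace H] (π : G →* (H →L[ℂ] H))
    (hunit : ∀ (g : G) (x y : H), ⟪π g x, π g y⟫_ℂ = ⟪x, y⟫_ℂ)
    (Γ : Subgroup G) (L : Submodule ℂ H)
    (horth : ∀ γ γ' : Γ, γ ≠ γ' → ∀ x ∈ L, ∀ y ∈ L, ⟪π ↑γ x, π ↑γ' y⟫_ℂ = 0)
    (hgen : (⨆ γ : Γ, L.map (π ↑γ).toLinearMap).topologicalClosure = ⊤)
    (P : H →L[ℂ] H)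
    (hPmem : ∀ x : H, P x ∈ L) (hPfix : ∀ x ∈ L, P x = x)
    (hPorth : ∀ x : H, ∀ y ∈ L, ⟪x - P x, y⟫_ℂ = 0)
    (P₀ : H →L[ℂ] H) (hP₀idem : P₀.comp P₀ = P₀)
    (hP₀sa : ∀ x y : H, ⟪P₀ x, y⟫_ℂ = ⟪x, P₀ y⟫_ℂ)
    (hcomm : ∀ g : G, P₀.comp (π g) = (π g).comp P₀)
    (σ₁ σ₂ : G)
    (hs₁ : Summable fun γ : Γ => ‖P.comp (P₀.comp ((π (σ₁ * ↑γ)).comp (P₀.comp P)))‖)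
    (hs₂ : Summable fun γ : Γ => ‖P.comp (P₀.comp ((π (↑γ * σ₂)).comp (P₀.comp P)))‖)
    (hs₃ : Summable fun γ : Γ =>
      ‖P.comp (P₀.comp ((π (σ₁ * ↑γ * σ₂)).comp (P₀.comp P)))‖) :
    (∑' γ : Γ, P.comp (P₀.comp ((π (σ₁ * ↑γ)).comp (P₀.comp P)))).comp
        (∑' γ : Γ, P.comp (P₀.comp ((π (↑γ * σ₂)).comp (P₀.comp P))))
      = ∑' γ : Γ, P.comp (P₀.comp ((π (σ₁ * ↑γ * σ₂)).comp (P₀.comp P))) := by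
  classical
  set A : Γ → (H →L[ℂ] H) :=
    fun γ => P.comp (P₀.comp ((π (σ₁ * ↑γ)).comp (P₀.comp P))) with hA
  set B : Γ → (H →L[ℂ] H) :=
    fun γ => P.comp (P₀.comp ((π (↑γ * σ₂)).comp (P₀.comp P))) with hB
  set C : Γ → (H →L[ℂ] H) :=
    fun γ => P.comp (P₀.comp ((π (σ₁ * ↑γ * σ₂)).comp (P₀.comp P))) with hC
  -- pointwise commutation facts
  have hc : ∀ (g : G) (z : H), P₀ (π g z) = π g (P₀ z) := by
    intro g z
    calc P₀ (π g z) = (P₀.comp (π g)) z := rfl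
      _ = ((π g).comp P₀) z := by rw [hcomm g]
      _ = π g (P₀ z) := rfl
  have hPP : ∀ z : H, P (P z) = P z := fun z => hPfix _ (hPmem z)
  have h00 : ∀ z : H, P₀ (P₀ z) = P₀ z := by
    intro z
    calc P₀ (P₀ z) = (P₀.comp P₀) z := rfl
      _ = P₀ z := by rw [hP₀idem]
  -- step 1: product of sums as a sum over pairs
  have hstep1 : (∑' γ : Γ, A γ).comp (∑' γ : Γ, B γ)
      = ∑' z : Γ × Γ, A z.1 * B z.2 := by
    rw [← ContinuousLinearMap.mul_def, tsum_mul_tsum_of_summable_norm hs₁ hs₂]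
  -- reindexing equivalence
  let e : Γ × Γ ≃ Γ × Γ :=
    { toFun := fun p => (p.1 * p.2, p.1)
      invFun := fun q => (q.2, q.2⁻¹ * q.1)
      left_inv := by intro p; simp
      right_inv := by intro q; simp }
  have hAB : Summable fun z : Γ × Γ => A z.1 * B z.2 :=
    summable_mul_of_summable_norm hs₁ hs₂
  have hg : Summable fun q : Γ × Γ => A q.2 * B (q.2⁻¹ * q.1) := by
    have hinj : Function.Injective (fun q : Γ × Γ => ((q.2, q.2⁻¹ * q.1) : Γ × Γ)) := by
      intro a b h
      have h1 : a.2 = b.2 := congrArg Prod.fst h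
      have h2 : a.2⁻¹ * a.1 = b.2⁻¹ * b.1 := congrArg Prod.snd h
      rw [h1] at h2
      exact Prod.ext (mul_left_cancel h2) h1
    exact (hAB.comp_injective hinj).congr fun q => rfl
  have hstep2 : ∑' z : Γ × Γ, A z.1 * B z.2
      = ∑' q : Γ × Γ, A q.2 * B (q.2⁻¹ * q.1) := by
    rw [← Equiv.tsum_eq e (fun q : Γ × Γ => A q.2 * B (q.2⁻¹ * q.1))]
    refine tsum_congr fun p => ?_
    simp [e]
  have hstep3 : ∑' q : Γ × Γ, A q.2 * B (q.2⁻¹ * q.1)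
      = ∑' δ : Γ, ∑' γ : Γ, A γ * B (γ⁻¹ * δ) := Summable.tsum_prod hg
  -- the inner identity
  have hinner : ∀ δ : Γ, ∑' γ : Γ, A γ * B (γ⁻¹ * δ) = C δ := by
    intro δ
    have hsumδ : Summable fun γ : Γ => A γ * B (γ⁻¹ * δ) := hg.prod_factor δ
    refine ContinuousLinearMap.ext fun x => ?_
    have h1 : HasSum (fun γ : Γ => (A γ * B (γ⁻¹ * δ)) x)
        ((∑' γ : Γ, A γ * B (γ⁻¹ * δ)) x) := by
      have := hsumδ.hasSum.mapL (ContinuousLinearMap.apply ℂ H x)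
      simpa using this
    set v : H := P₀ (π (↑δ * σ₂) (P₀ (P x))) with hv
    have hkey := wandering_hasSum π hunit Γ L horth hgen P hPmem hPfix hPorth v
    have hF := hkey.mapL (P.comp (P₀.comp (π σ₁)))
    have h2 : HasSum (fun γ : Γ => (A γ * B (γ⁻¹ * δ)) x) (C δ x) := by
      have hfun : (fun γ : Γ => (A γ * B (γ⁻¹ * δ)) x)
          = fun γ : Γ => (P.comp (P₀.comp (π σ₁))) (π ↑γ (P (π ((↑γ : G))⁻¹ v))) := by
        funext γ
        simp only [hA, hB, hv, ContinuousLinearMap.mul_apply,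
          ContinuousLinearMap.comp_apply, map_mul, Subgroup.coe_mul, InvMemClass.coe_inv,
          hPP, hc, h00]
      have hval : (P.comp (P₀.comp (π σ₁))) v = C δ x := by
        simp only [hC, hv, ContinuousLinearMap.comp_apply, map_mul,
          ContinuousLinearMap.mul_apply, hPP, hc, h00]
      rw [hfun, ← hval]
      exact hF
    exact h1.unique h2
  rw [hstep1, hstep2, hstep3]
  exact tsum_congr hinner
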